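/- Let (S₁,S₂,I₁,I₂,R₁,R₂,D₁,D₂) be a solution of the two-group active-population SIRD model on [0,∞) with Nᵢ(t) > 0 for all t ≥ 0, with initial data Sᵢ(0) > 0, Iᵢ(0), Rᵢ(0), Dᵢ(0) ≥ 0, and suppose all compartments remain in [0, Ñᵢ] where Ñᵢ = Sᵢ(0)+Iᵢ(0)+Rᵢ(0)+Dᵢ(0). Then for each i = 1,2 the limits Sᵢ^∞ = lim_{t→∞} Sᵢ(t), Iᵢ^∞ = lim_{t→∞} Iᵢ(t), Rᵢ^∞ = lim_{t→∞} Rᵢ(t), and Dᵢ^∞ = lim_{t→∞} Dᵢ(t) all exist. -/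

import Mathlib

open Filter

theorem aux_conv (C : ℝ) (f f' : ℝ → ℝ)
    (hf : ∀ t ≥ (0:ℝ), HasDerivAt f (f' t) t)
    (hsign : ∀ t ≥ (0:ℝ), 0 ≤ f' t)
    (hbd : ∀ t ≥ (0:ℝ), f t ≤ C) :
    ∃ l, Tendsto f atTop (nhds l) := by
  have hmono : MonotoneOn f (Set.Ici 0) := by
    apply monotoneOn_of_deriv_nonneg (convex_Ici 0)
    · intro x hx; exact (hf x hx).continuousAt.continuousWithinAt
    · intro x hx
      rw [interior_Ici] at hx
      exact (hf x hx.le).differentiableAt.differentiableWithinAt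
    · intro x hx
      rw [interior_Ici] at hx
      rw [(hf x hx.le).deriv]
      exact hsign x hx.le
  set g : ℝ → ℝ := fun t => f (max t 0) with hg
  have hgmono : Monotone g := fun a b hab =>
    hmono (le_max_right a 0) (le_max_right b 0) (max_le_max hab le_rfl)
  have hgbd : BddAbove (Set.range g) := ⟨C, by rintro _ ⟨t, rfl⟩; exact hbd _ (le_max_right t 0)⟩
  refine ⟨_, (tendsto_atTop_ciSup hgmono hgbd).congr' ?_⟩
  filter_upwards [eventually_ge_atTop (0:ℝ)] with t ht
  simp [g, max_eq_left ht]

theorem stmt_1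
    (β11 β12 β21 β22 γ1 γ2 μ1 μ2 : ℝ)
    (hβ11 : 0 < β11) (hβ12 : 0 < β12) (hβ21 : 0 < β21) (hβ22 : 0 < β22)
    (hγ1 : 0 < γ1) (hγ2 : 0 < γ2) (hμ1 : 0 < μ1) (hμ2 : 0 < μ2)
    (S1 S2 I1 I2 R1 R2 D1 D2 N1 N2 : ℝ → ℝ)
    (hN1 : ∀ t, N1 t = S1 t + I1 t + R1 t)
    (hN2 : ∀ t, N2 t = S2 t + I2 t + R2 t)
    (hS1' : ∀ t ≥ (0:ℝ), HasDerivAt S1 (-(β11 * I1 t / N1 t + β12 * I2 t / N2 t) * S1 t) t)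
    (hS2' : ∀ t ≥ (0:ℝ), HasDerivAt S2 (-(β21 * I1 t / N1 t + β22 * I2 t / N2 t) * S2 t) t)
    (hI1' : ∀ t ≥ (0:ℝ), HasDerivAt I1 ((β11 * I1 t / N1 t + β12 * I2 t / N2 t) * S1 t - (γ1 + μ1) * I1 t) t)
    (hI2' : ∀ t ≥ (0:ℝ), HasDerivAt I2 ((β21 * I1 t / N1 t + β22 * I2 t / N2 t) * S2 t - (γ2 + μ2) * I2 t) t)
    (hR1' : ∀ t ≥ (0:ℝ), HasDerivAt R1 (γ1 * I1 t) t)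
    (hR2' : ∀ t ≥ (0:ℝ), HasDerivAt R2 (γ2 * I2 t) t)
    (hD1' : ∀ t ≥ (0:ℝ), HasDerivAt D1 (μ1 * I1 t) t)
    (hD2' : ∀ t ≥ (0:ℝ), HasDerivAt D2 (μ2 * I2 t) t)
    (hN1pos : ∀ t ≥ (0:ℝ), 0 < N1 t)
    (hN2pos : ∀ t ≥ (0:ℝ), 0 < N2 t)
    (hS10 : 0 < S1 0) (hS20 : 0 < S2 0)
    (hI10 : 0 ≤ I1 0) (hI20 : 0 ≤ I2 0)
    (hR10 : 0 ≤ R1 0) (hR20 : 0 ≤ R2 0)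
    (hD10 : 0 ≤ D1 0) (hD20 : 0 ≤ D2 0)
    (hbox1 : ∀ t ≥ (0:ℝ), (0 ≤ S1 t ∧ S1 t ≤ S1 0 + I1 0 + R1 0 + D1 0) ∧
      (0 ≤ I1 t ∧ I1 t ≤ S1 0 + I1 0 + R1 0 + D1 0) ∧
      (0 ≤ R1 t ∧ R1 t ≤ S1 0 + I1 0 + R1 0 + D1 0) ∧
      (0 ≤ D1 t ∧ D1 t ≤ S1 0 + I1 0 + R1 0 + D1 0))
    (hbox2 : ∀ t ≥ (0:ℝ), (0 ≤ S2 t ∧ S2 t ≤ S2 0 + I2 0 + R2 0 + D2 0) ∧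
      (0 ≤ I2 t ∧ I2 t ≤ S2 0 + I2 0 + R2 0 + D2 0) ∧
      (0 ≤ R2 t ∧ R2 t ≤ S2 0 + I2 0 + R2 0 + D2 0) ∧
      (0 ≤ D2 t ∧ D2 t ≤ S2 0 + I2 0 + R2 0 + D2 0))
    :
    ((∃ l : ℝ, Tendsto S1 atTop (nhds l)) ∧ (∃ l : ℝ, Tendsto I1 atTop (nhds l)) ∧
     (∃ l : ℝ, Tendsto R1 atTop (nhds l)) ∧ (∃ l : ℝ, Tendsto D1 atTop (nhds l))) ∧
    ((∃ l : ℝ, Tendsto S2 atTop (nhds l)) ∧ (∃ l : ℝ, Tendsto I2 atTop (nhds l)) ∧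
     (∃ l : ℝ, Tendsto R2 atTop (nhds l)) ∧ (∃ l : ℝ, Tendsto D2 atTop (nhds l))) := by
  have hforce1 : ∀ t ≥ (0:ℝ), 0 ≤ β11 * I1 t / N1 t + β12 * I2 t / N2 t := by
    intro t ht
    have h1 := (hbox1 t ht).2.1.1
    have h2 := (hbox2 t ht).2.1.1
    have hn1 := hN1pos t ht
    have hn2 := hN2pos t ht
    positivity
  have hforce2 : ∀ t ≥ (0:ℝ), 0 ≤ β21 * I1 t / N1 t + β22 * I2 t / N2 t := by
    intro t ht
    have h1 := (hbox1 t ht).2.1.1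
    have h2 := (hbox2 t ht).2.1.1
    have hn1 := hN1pos t ht
    have hn2 := hN2pos t ht
    positivity
  -- S1
  obtain ⟨lS1, hlS1⟩ : ∃ l, Tendsto (fun t => -S1 t) atTop (nhds l) := by
    apply aux_conv 0 _ (fun t => (β11 * I1 t / N1 t + β12 * I2 t / N2 t) * S1 t)
    · intro t ht
      have := (hS1' t ht).neg
      refine this.congr_deriv ?_
      ring
    · intro t ht
      exact mul_nonneg (hforce1 t ht) (hbox1 t ht).1.1
    · intro t ht
      simpa using (hbox1 t ht).1.1
  have hS1lim : Tendsto S1 atTop (nhds (-lS1)) := by simpa using hlS1.neg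
  -- S2
  obtain ⟨lS2, hlS2⟩ : ∃ l, Tendsto (fun t => -S2 t) atTop (nhds l) := by
    apply aux_conv 0 _ (fun t => (β21 * I1 t / N1 t + β22 * I2 t / N2 t) * S2 t)
    · intro t ht
      have := (hS2' t ht).neg
      refine this.congr_deriv ?_
      ring
    · intro t ht
      exact mul_nonneg (hforce2 t ht) (hbox2 t ht).1.1
    · intro t ht
      simpa using (hbox2 t ht).1.1
  have hS2lim : Tendsto S2 atTop (nhds (-lS2)) := by simpa using hlS2.neg
  -- R1, D1, R2, D2
  obtain ⟨lR1, hR1lim⟩ : ∃ l, Tendsto R1 atTop (nhds l) := by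
    apply aux_conv (S1 0 + I1 0 + R1 0 + D1 0) _ (fun t => γ1 * I1 t) hR1'
    · intro t ht; exact mul_nonneg hγ1.le (hbox1 t ht).2.1.1
    · intro t ht; exact (hbox1 t ht).2.2.1.2
  obtain ⟨lD1, hD1lim⟩ : ∃ l, Tendsto D1 atTop (nhds l) := by
    apply aux_conv (S1 0 + I1 0 + R1 0 + D1 0) _ (fun t => μ1 * I1 t) hD1'
    · intro t ht; exact mul_nonneg hμ1.le (hbox1 t ht).2.1.1
    · intro t ht; exact (hbox1 t ht).2.2.2.2
  obtain ⟨lR2, hR2lim⟩ : ∃ l, Tendsto R2 atTop (nhds l) := by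
    apply aux_conv (S2 0 + I2 0 + R2 0 + D2 0) _ (fun t => γ2 * I2 t) hR2'
    · intro t ht; exact mul_nonneg hγ2.le (hbox2 t ht).2.1.1
    · intro t ht; exact (hbox2 t ht).2.2.1.2
  obtain ⟨lD2, hD2lim⟩ : ∃ l, Tendsto D2 atTop (nhds l) := by
    apply aux_conv (S2 0 + I2 0 + R2 0 + D2 0) _ (fun t => μ2 * I2 t) hD2'
    · intro t ht; exact mul_nonneg hμ2.le (hbox2 t ht).2.1.1
    · intro t ht; exact (hbox2 t ht).2.2.2.2
  -- totals F1, F2 are monotone (derivative 0) hence converge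
  obtain ⟨lF1, hF1lim⟩ : ∃ l, Tendsto (fun t => S1 t + I1 t + R1 t + D1 t) atTop (nhds l) := by
    apply aux_conv (4 * (S1 0 + I1 0 + R1 0 + D1 0)) _ (fun _ => (0:ℝ))
    · intro t ht
      have := (((hS1' t ht).add (hI1' t ht)).add (hR1' t ht)).add (hD1' t ht)
      refine this.congr_deriv ?_
      ring
    · intro t ht; exact le_refl 0
    · intro t ht
      have h := hbox1 t ht
      linarith [h.1.2, h.2.1.2, h.2.2.1.2, h.2.2.2.2]
  obtain ⟨lF2, hF2lim⟩ : ∃ l, Tendsto (fun t => S2 t + I2 t + R2 t + D2 t) atTop (nhds l) := by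
    apply aux_conv (4 * (S2 0 + I2 0 + R2 0 + D2 0)) _ (fun _ => (0:ℝ))
    · intro t ht
      have := (((hS2' t ht).add (hI2' t ht)).add (hR2' t ht)).add (hD2' t ht)
      refine this.congr_deriv ?_
      ring
    · intro t ht; exact le_refl 0
    · intro t ht
      have h := hbox2 t ht
      linarith [h.1.2, h.2.1.2, h.2.2.1.2, h.2.2.2.2]
  -- I1, I2 limits
  have hI1lim : Tendsto I1 atTop (nhds (lF1 - (-lS1) - lR1 - lD1)) := by
    have := ((hF1lim.sub hS1lim).sub hR1lim).sub hD1lim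
    refine this.congr fun t => by ring
  have hI2lim : Tendsto I2 atTop (nhds (lF2 - (-lS2) - lR2 - lD2)) := by
    have := ((hF2lim.sub hS2lim).sub hR2lim).sub hD2lim
    refine this.congr fun t => by ring
  exact ⟨⟨⟨_, hS1lim⟩, ⟨_, hI1lim⟩, ⟨_, hR1lim⟩, ⟨_, hD1lim⟩⟩,
    ⟨⟨_, hS2lim⟩, ⟨_, hI2lim⟩, ⟨_, hR2lim⟩, ⟨_, hD2lim⟩⟩⟩
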